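/- For every n ≥ 1, the ai-semiring S_{(4,545)} satisfies the inequality x₁x₂⋯xₙxₙ₊₁ ≤ x₁x₂⋯xₙ + x₁xₙ₊₁y₁ + x₂xₙ₊₁y₂ + ⋯ + xₙxₙ₊₁yₙ, where u ≤ v means u + v = v. -/

import Mathlib

/-- Multiplication table of S_{(4,545)}; encoding: 0 = 0, 1 = 1, 2 = a, 3 = ∞.
Note 1 is a multiplicative identity. -/
def mul545 (x y : Fin 4) : Fin 4 :=
  ![![0, 0, 2, 3],
    ![0, 1, 2, 3],
    ![2, 2, 3, 3],
    ![3, 3, 3, 3]] x y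

lemma mul545_ge2 : ∀ l : List (Fin 4), 2 ≤ l.foldr mul545 1 → ∃ x ∈ l, 2 ≤ x := by
  intro l
  induction l with
  | nil => intro h; exact absurd h (by decide)
  | cons a l ih =>
    intro h
    have key : ∀ x p : Fin 4, 2 ≤ mul545 x p → 2 ≤ x ∨ 2 ≤ p := by decide
    rcases key a _ h with h1 | h1
    · exact ⟨a, List.mem_cons_self, h1⟩
    · obtain ⟨x, hx, h2⟩ := ih h1
      exact ⟨x, List.mem_cons_of_mem a hx, h2⟩

lemma le_foldr_max : ∀ (l : List (Fin 4)) (x : Fin 4), x ∈ l → x ≤ l.foldr max 0 := by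
  intro l
  induction l with
  | nil => intro x hx; simp at hx
  | cons a l ih =>
    intro x hx
    rcases List.mem_cons.mp hx with rfl | hx
    · exact le_max_left _ _
    · exact le_trans (ih x hx) (le_max_right _ _)

/-- For every n ≥ 1, S_{(4,545)} satisfies
x₁⋯xₙxₙ₊₁ ≤ x₁⋯xₙ + x₁xₙ₊₁y₁ + ⋯ + xₙxₙ₊₁yₙ, where addition is `max` and `u ≤ v`
means `u + v = v`. -/
theorem stmt10 : ∀ n : ℕ, 1 ≤ n → ∀ (s : Fin n → Fin 4) (t : Fin 4) (ys : Fin n → Fin 4),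
    max (mul545 ((List.ofFn s).foldr mul545 1) t)
        (max ((List.ofFn s).foldr mul545 1)
             ((List.ofFn (fun i => mul545 (mul545 (s i) t) (ys i))).foldr max 0))
    = max ((List.ofFn s).foldr mul545 1)
          ((List.ofFn (fun i => mul545 (mul545 (s i) t) (ys i))).foldr max 0) := by
  intro n hn s t ys
  set P := (List.ofFn s).foldr mul545 1 with hP
  set Q := (List.ofFn (fun i => mul545 (mul545 (s i) t) (ys i))).foldr max 0 with hQ
  apply max_eq_right
  by_cases h2 : 2 ≤ P
  · obtain ⟨x, hx, hx2⟩ := mul545_ge2 _ h2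
    obtain ⟨i, rfl⟩ := List.mem_ofFn.mp hx
    have hQi : mul545 (mul545 (s i) t) (ys i) ≤ Q :=
      le_foldr_max _ _ (by exact List.mem_ofFn.mpr ⟨i, rfl⟩)
    have key : ∀ P t si yi : Fin 4, 2 ≤ P → 2 ≤ si →
        mul545 P t ≤ max P (mul545 (mul545 si t) yi) := by decide
    exact le_trans (key P t (s i) (ys i) h2 hx2)
      (max_le_max le_rfl hQi)
  · push_neg at h2
    have h1 : P ≤ 1 := by omega
    set i : Fin n := ⟨0, hn⟩
    have hQi : mul545 (mul545 (s i) t) (ys i) ≤ Q :=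
      le_foldr_max _ _ (by exact List.mem_ofFn.mpr ⟨i, rfl⟩)
    have key : ∀ P t s0 y0 : Fin 4, P ≤ 1 →
        mul545 P t ≤ max P (mul545 (mul545 s0 t) y0) := by decide
    exact le_trans (key P t (s i) (ys i) h1) (max_le_max le_rfl hQi)
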